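/- Let C be a locally presentable category. Then the trivial model structure on C — in which the weak equivalences are exactly the isomorphisms, every morphism is a fibration, and every morphism is a cofibration — is cofibrantly generated: choosing a regular cardinal κ with C κ-presentable and S a set of representatives of isomorphism classes of κ-compact objects, the sets I = { A → B : A, B ∈ S } (all morphisms between objects of S) and J = { id_A : A ∈ S } are generating sets of cofibrations and trivial cofibrations respectively. -/

import Mathlib

/-!
STATEMENT 4: For a locally presentable category `C`, the trivial model structure
(weak equivalences = isomorphisms, all maps fibrations and cofibrations) is cofibrantly
generated: choosing a regular cardinal `κ` such that `C` is `κ`-presentable and a set `S`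
of representatives of isomorphism classes of `κ`-compact objects, the set
`I = {A ⟶ B : A, B ∈ S}` of all morphisms between objects of `S` generates the
cofibrations (i.e. the trivial fibrations — here, the isomorphisms — are exactly the
maps with the right lifting property against `I`) and `J = {id_A : A ∈ S}` generates the
trivial cofibrations (i.e. the fibrations — here, all maps — are exactly the maps with
the right lifting property against `J`).

Since Mathlib does not yet have locally presentable categories, we define
`κ`-filteredness, `κ`-compactness and `κ`-presentability of `C` here.
-/

open CategoryTheory Limits Opposite

universe v u

variable {C : Type u} [Category.{v} C]

/-- A small category `J` is `κ`-filtered if every diagram in `J` of size `< κ`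
admits a cocone. -/
def IsCardinalFilteredCat (κ : Cardinal.{v}) (J : Type v) [SmallCategory J] : Prop :=
  ∀ (K : Type v) (_ : SmallCategory K), Cardinal.mk (Arrow K) < κ →
    ∀ G : K ⥤ J, Nonempty (Cocone G)

/-- An object `A` of `C` is `κ`-compact (`κ`-presentable) if `Hom(A, -)` preserves
colimits of `κ`-filtered diagrams. -/
def IsKappaCompact (κ : Cardinal.{v}) (A : C) : Prop :=
  ∀ (J : Type v) (_ : SmallCategory J), IsCardinalFilteredCat κ J →
    ∀ (F : J ⥤ C) (c : Cocone F), Nonempty (IsColimit c) →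
      Nonempty (IsColimit ((coyoneda.obj (op A)).mapCocone c))

/-- `C` is `κ`-presentable: it is cocomplete and every object is a colimit of a
`κ`-filtered diagram of `κ`-compact objects. -/
def IsKappaPresentable (κ : Cardinal.{v}) (C : Type u) [Category.{v} C] : Prop :=
  HasColimits C ∧
    ∀ X : C, ∃ (J : Type v) (_ : SmallCategory J), IsCardinalFilteredCat κ J ∧
      ∃ (F : J ⥤ C) (c : Cocone F), (∀ j : J, IsKappaCompact κ (F.obj j)) ∧
        c.pt = X ∧ Nonempty (IsColimit c)

namespace Statement4Aux

lemma finiteArrow (K : Type*) [Category K] [Finite K] [∀ X Y : K, Finite (X ⟶ Y)] :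
    Finite (Arrow K) := by
  let F : Arrow K → Σ (X Y : K), X ⟶ Y := fun a => ⟨a.left, a.right, a.hom⟩
  have hF : Function.Injective F := by
    rintro ⟨l, r, h⟩ ⟨l', r', h'⟩ e
    obtain ⟨rfl, e⟩ := Sigma.mk.inj_iff.mp e
    obtain ⟨rfl, e⟩ := Sigma.mk.inj_iff.mp (eq_of_heq e)
    cases eq_of_heq e
    rfl
  exact Finite.of_injective F hF

lemma arrow_lt (κ : Cardinal.{v}) (hκ : κ.IsRegular) (K : Type v) [SmallCategory K]
    [Finite K] [∀ X Y : K, Finite (X ⟶ Y)] : Cardinal.mk (Arrow K) < κ := by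
  haveI := finiteArrow K
  exact lt_of_lt_of_le (Cardinal.lt_aleph0_of_finite _) hκ.aleph0_le

lemma isFiltered_of_cardinal {κ : Cardinal.{v}} (hκ : κ.IsRegular) {J : Type v} [SmallCategory J]
    (hJ : IsCardinalFilteredCat κ J) : IsFiltered J := by
  have hne : Nonempty J := by
    obtain ⟨c⟩ := hJ (Discrete PEmpty.{v+1}) _ (arrow_lt κ hκ _) (Functor.empty J)
    exact ⟨c.pt⟩
  refine { cocone_objs := ?_, cocone_maps := ?_ }
  · intro X Y
    obtain ⟨c⟩ := hJ (Discrete (ULift.{v} Bool)) _ (arrow_lt κ hκ _)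
      (Discrete.functor (fun b => cond b.down X Y))
    exact ⟨c.pt, c.ι.app ⟨ULift.up true⟩, c.ι.app ⟨ULift.up false⟩, trivial⟩
  · intro X Y f g
    let e := ULiftHomULiftCategory.equiv.{v, v} WalkingParallelPair
    obtain ⟨c⟩ := hJ (ULiftHom.{v} (ULift.{v} WalkingParallelPair)) _ (arrow_lt κ hκ _)
      (e.inverse ⋙ parallelPair f g)
    refine ⟨c.pt, c.ι.app (e.functor.obj WalkingParallelPair.one), ?_⟩
    have h1 := c.w (e.functor.map WalkingParallelPairHom.left)
    have h2 := c.w (e.functor.map WalkingParallelPairHom.right)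
    exact h1.trans h2.symm

lemma compact_surj {κ : Cardinal.{v}} {A : C} (hA : IsKappaCompact κ A)
    {J : Type v} [SmallCategory J] (hJ : IsCardinalFilteredCat κ J)
    {F : J ⥤ C} {c : Cocone F} (hc : IsColimit c) (w : A ⟶ c.pt) :
    ∃ (j : J) (u : A ⟶ F.obj j), u ≫ c.ι.app j = w := by
  obtain ⟨hm⟩ := hA J _ hJ F c ⟨hc⟩
  obtain ⟨j, u, hu⟩ := Types.jointly_surjective _ hm w
  exact ⟨j, u, hu⟩

lemma compact_eq {κ : Cardinal.{v}} {A : C} (hA : IsKappaCompact κ A)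
    {J : Type v} [SmallCategory J] [IsFiltered J] (hJ : IsCardinalFilteredCat κ J)
    {F : J ⥤ C} {c : Cocone F} (hc : IsColimit c) {i j : J}
    (u : A ⟶ F.obj i) (v : A ⟶ F.obj j) (h : u ≫ c.ι.app i = v ≫ c.ι.app j) :
    ∃ (k : J) (f : i ⟶ k) (g : j ⟶ k), u ≫ F.map f = v ≫ F.map g := by
  obtain ⟨hm⟩ := hA J _ hJ F c ⟨hc⟩
  exact (Types.FilteredColimit.isColimit_eq_iff (F ⋙ coyoneda.obj (op A)) hm
    (xi := u) (xj := v)).mp h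

lemma compact_initial (κ : Cardinal.{v}) (hκ : κ.IsRegular) [HasInitial C] :
    IsKappaCompact κ (⊥_ C) := by
  intro J _ hJ F c ⟨hc⟩
  haveI : IsFiltered J := isFiltered_of_cardinal hκ hJ
  refine ⟨Types.FilteredColimit.isColimitOf _ _ ?_ ?_⟩
  · intro x
    exact ⟨IsFiltered.nonempty.some, initial.to _, initial.hom_ext _ _⟩
  · intro i j xi xj _
    exact ⟨IsFiltered.max i j, IsFiltered.leftToMax i j, IsFiltered.rightToMax i j,
      initial.hom_ext _ _⟩

lemma compact_coprod (κ : Cardinal.{v}) (hκ : κ.IsRegular) [HasBinaryCoproducts C]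
    {A B : C} (hA : IsKappaCompact κ A) (hB : IsKappaCompact κ B) :
    IsKappaCompact κ (A ⨿ B) := by
  intro J _ hJ F c ⟨hc⟩
  haveI : IsFiltered J := isFiltered_of_cardinal hκ hJ
  refine ⟨Types.FilteredColimit.isColimitOf _ _ ?_ ?_⟩
  · intro x
    obtain ⟨j₁, u₁, hu₁⟩ := compact_surj hA hJ hc (coprod.inl ≫ x)
    obtain ⟨j₂, u₂, hu₂⟩ := compact_surj hB hJ hc (coprod.inr ≫ x)
    refine ⟨IsFiltered.max j₁ j₂,
      coprod.desc (u₁ ≫ F.map (IsFiltered.leftToMax j₁ j₂))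
        (u₂ ≫ F.map (IsFiltered.rightToMax j₁ j₂)), ?_⟩
    apply coprod.hom_ext
    · show coprod.inl ≫ x = coprod.inl ≫ (_ ≫ c.ι.app _)
      rw [coprod.inl_desc_assoc, Category.assoc, c.w, hu₁]
    · show coprod.inr ≫ x = coprod.inr ≫ (_ ≫ c.ι.app _)
      rw [coprod.inr_desc_assoc, Category.assoc, c.w, hu₂]
  · intro i j xi xj h
    have h1 : (coprod.inl ≫ xi) ≫ c.ι.app i = (coprod.inl ≫ xj) ≫ c.ι.app j := by
      simp only [Category.assoc]
      exact congrArg (fun t => coprod.inl ≫ t) h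
    have h2 : (coprod.inr ≫ xi) ≫ c.ι.app i = (coprod.inr ≫ xj) ≫ c.ι.app j := by
      simp only [Category.assoc]
      exact congrArg (fun t => coprod.inr ≫ t) h
    obtain ⟨k₁, f₁, g₁, e₁⟩ := compact_eq hA hJ hc _ _ h1
    obtain ⟨k₂, f₂, g₂, e₂⟩ := compact_eq hB hJ hc _ _ h2
    obtain ⟨s, α, β, hαβ₁, hαβ₂⟩ := IsFiltered.bowtie f₁ f₂ g₁ g₂
    refine ⟨s, f₁ ≫ α, g₁ ≫ α, ?_⟩
    show xi ≫ F.map (f₁ ≫ α) = xj ≫ F.map (g₁ ≫ α)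
    apply coprod.hom_ext
    · simp only [F.map_comp, ← Category.assoc]
      rw [e₁]
    · rw [hαβ₁, hαβ₂]
      simp only [F.map_comp, ← Category.assoc]
      rw [e₂]

variable {κ : Cardinal.{v}} {S : Set C}

lemma exists_lift (hκ : κ.IsRegular) [HasInitial C]
    (hS_repr : ∀ X : C, IsKappaCompact κ X → ∃ A ∈ S, Nonempty (X ≅ A))
    {X Y : C} (f : X ⟶ Y)
    (hf : ∀ A B : C, A ∈ S → B ∈ S → ∀ g : A ⟶ B, HasLiftingProperty g f)
    {A : C} (hA : IsKappaCompact κ A) (w : A ⟶ Y) : ∃ u : A ⟶ X, u ≫ f = w := by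
  obtain ⟨A', hA', ⟨eA⟩⟩ := hS_repr A hA
  obtain ⟨O, hO, ⟨eO⟩⟩ := hS_repr (⊥_ C) (compact_initial κ hκ)
  haveI := hf O A' hO hA' (eO.inv ≫ initial.to A')
  have sq : CommSq (eO.inv ≫ initial.to X) (eO.inv ≫ initial.to A') f (eA.inv ≫ w) := by
    constructor
    simp only [Category.assoc]
    congr 1
    exact initial.hom_ext _ _
  refine ⟨eA.hom ≫ sq.lift, ?_⟩
  rw [Category.assoc, sq.fac_right, Iso.hom_inv_id_assoc]

lemma lift_unique (hκ : κ.IsRegular) [HasBinaryCoproducts C]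
    (hS_repr : ∀ X : C, IsKappaCompact κ X → ∃ A ∈ S, Nonempty (X ≅ A))
    {X Y : C} (f : X ⟶ Y)
    (hf : ∀ A B : C, A ∈ S → B ∈ S → ∀ g : A ⟶ B, HasLiftingProperty g f)
    {A : C} (hA : IsKappaCompact κ A) (u v : A ⟶ X) (huv : u ≫ f = v ≫ f) : u = v := by
  obtain ⟨P, hP, ⟨eP⟩⟩ := hS_repr (A ⨿ A) (compact_coprod κ hκ hA hA)
  obtain ⟨Q, hQ, ⟨eQ⟩⟩ := hS_repr A hA
  haveI := hf P Q hP hQ (eP.inv ≫ coprod.desc (𝟙 A) (𝟙 A) ≫ eQ.hom)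
  have sq : CommSq (eP.inv ≫ coprod.desc u v)
      (eP.inv ≫ coprod.desc (𝟙 A) (𝟙 A) ≫ eQ.hom) f (eQ.inv ≫ u ≫ f) := by
    constructor
    simp only [Category.assoc, Iso.hom_inv_id_assoc]
    congr 1
    apply coprod.hom_ext
    · simp [huv]
    · simp [huv]
  have h1 : coprod.desc (𝟙 A) (𝟙 A) ≫ eQ.hom ≫ sq.lift = coprod.desc u v := by
    have h := sq.fac_left
    simp only [Category.assoc] at h
    exact (cancel_epi eP.inv).mp h
  have hu : u = eQ.hom ≫ sq.lift := by
    have := congrArg (fun t => coprod.inl ≫ t) h1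
    simp only [coprod.inl_desc_assoc, coprod.inl_desc, Category.id_comp] at this
    exact this.symm
  have hv : v = eQ.hom ≫ sq.lift := by
    have := congrArg (fun t => coprod.inr ≫ t) h1
    simp only [coprod.inr_desc_assoc, coprod.inr_desc, Category.id_comp] at this
    exact this.symm
  exact hu.trans hv.symm

end Statement4Aux

open Statement4Aux in
theorem statement4 (κ : Cardinal.{v}) (hκ : κ.IsRegular)
    (hpres : IsKappaPresentable κ C)
    (S : Set C)
    (hS_compact : ∀ A ∈ S, IsKappaCompact κ A)
    (hS_repr : ∀ X : C, IsKappaCompact κ X → ∃ A ∈ S, Nonempty (X ≅ A)) :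
    -- `J = {id_A : A ∈ S}` generates the trivial cofibrations: the fibrations of the
    -- trivial model structure (namely, all morphisms) are exactly the maps with the
    -- right lifting property against `J` ...
    (∀ {X Y : C} (f : X ⟶ Y),
      (∀ (A : C), A ∈ S → HasLiftingProperty (𝟙 A) f)) ∧
    -- ... and `I = {A ⟶ B : A, B ∈ S}` generates the cofibrations: the trivial
    -- fibrations of the trivial model structure (namely, the isomorphisms) are exactly
    -- the maps with the right lifting property against `I`.
    (∀ {X Y : C} (f : X ⟶ Y),
      (∀ (A B : C), A ∈ S → B ∈ S → ∀ g : A ⟶ B, HasLiftingProperty g f) ↔ IsIso f) := by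
  haveI : HasColimits C := hpres.1
  constructor
  · intro X Y f A _
    infer_instance
  · intro X Y f
    constructor
    · intro hf
      obtain ⟨J, instJ, hJ, F, c, hcomp, hpt, ⟨hc⟩⟩ := hpres.2 Y
      subst hpt
      obtain ⟨J', instJ', hJ', F', c', hcomp', hpt', ⟨hc'⟩⟩ := hpres.2 X
      subst hpt'
      have hE : ∀ j : J, ∃ u : F.obj j ⟶ c'.pt, u ≫ f = c.ι.app j :=
        fun j => exists_lift hκ hS_repr f hf (hcomp j) (c.ι.app j)
      choose u hu using hE
      have hnat : ∀ {j j' : J} (φ : j ⟶ j'), F.map φ ≫ u j' = u j := by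
        intro j j' φ
        apply lift_unique hκ hS_repr f hf (hcomp j)
        rw [Category.assoc, hu, hu, c.w]
      let g : c.pt ⟶ c'.pt := hc.desc ⟨c'.pt,
        { app := u
          naturality := by
            intro j j' φ
            simp [hnat φ] }⟩
      have hg : ∀ j, c.ι.app j ≫ g = u j := fun j => hc.fac _ j
      have hgf : g ≫ f = 𝟙 c.pt := by
        apply hc.hom_ext
        intro j
        rw [← Category.assoc, hg, hu]
        simp
      have hfg : f ≫ g = 𝟙 c'.pt := by
        apply hc'.hom_ext
        intro i
        apply lift_unique hκ hS_repr f hf (hcomp' i)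
        simp [hgf]
      exact ⟨g, hfg, hgf⟩
    · intro _ A B _ _ g
      infer_instance
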